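/- For every n ≥ 2 there exists a bijection B : 𝔐_n → 𝔐_n such that for every F ∈ 𝔐_n and every 1 ≤ i ≤ n, one has M_i(F) = T_i(B(F)) and T_i(F) = M_{i-1}(B(F)), where by convention the index i-1 is taken to be n when i = 1. -/

import Mathlib

/-- `F` is a minimal factorization of size `n`, i.e. a factorization of the cycle
`(1,2,…,n)` (represented as `finRotate n` on `Fin n`, where the element `i ∈ {1,…,n}`
corresponds to the index `i-1 : Fin n`) into `n-1` transpositions: each `F k` is a
transposition and the left-to-right product `τ₁ τ₂ ⋯ τ_{n-1}` (apply `τ₁` first)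
equals the cycle. -/
def IsMinFact (n : ℕ) (F : Fin (n - 1) → Equiv.Perm (Fin n)) : Prop :=
  (∀ k, (F k).IsSwap) ∧ (List.ofFn F).reverse.prod = finRotate n

/-- `T(F, x)`: the number of transpositions in `F` moving the element represented by `x`. -/
def Tcount {n : ℕ} (F : Fin (n - 1) → Equiv.Perm (Fin n)) (x : Fin n) : ℕ :=
  (Finset.univ.filter fun k : Fin (n - 1) => F k x ≠ x).card

/-- `M(F, x)`: the number of indices `1 ≤ k ≤ n-1` with `τ₁⋯τ_{k-1}(x) ≠ τ₁⋯τ_k(x)`,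
i.e. the number of transpositions affecting the trajectory of `x` (left-to-right
partial products, so `τ₁⋯τ_k` is the product of the first `k` entries, applied
`τ₁` first). -/
def Mcount {n : ℕ} (F : Fin (n - 1) → Equiv.Perm (Fin n)) (x : Fin n) : ℕ :=
  (Finset.univ.filter fun k : Fin (n - 1) =>
    ((List.ofFn F).take k.val).reverse.prod x ≠
      ((List.ofFn F).take (k.val + 1)).reverse.prod x).card

def pp {n : ℕ} (F : Fin (n - 1) → Equiv.Perm (Fin n)) (j : ℕ) : Equiv.Perm (Fin n) :=
  ((List.ofFn F).take j).reverse.prod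

lemma pp_succ {n : ℕ} (F : Fin (n - 1) → Equiv.Perm (Fin n)) (j : Fin (n - 1)) :
    pp F (j.val + 1) = F j * pp F j.val := by
  unfold pp
  have hj : (j : ℕ) < (List.ofFn F).length := by simp [j.isLt]
  rw [List.take_succ, List.getElem?_eq_getElem hj]
  simp

lemma pp_top {n : ℕ} {F : Fin (n - 1) → Equiv.Perm (Fin n)} (hF : IsMinFact n F) :
    pp F (n - 1) = finRotate n := by
  have : (List.ofFn F).take (n - 1) = List.ofFn F := by
    apply List.take_of_length_le; simp
  rw [pp, this, hF.2]

def Bfun {n : ℕ} (F : Fin (n - 1) → Equiv.Perm (Fin n)) :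
    Fin (n - 1) → Equiv.Perm (Fin n) :=
  fun k => (pp F k.rev.val)⁻¹ * F k.rev * pp F k.rev.val

lemma ppB {n : ℕ} {F : Fin (n - 1) → Equiv.Perm (Fin n)} (hF : IsMinFact n F) :
    ∀ k, k ≤ n - 1 → pp (Bfun F) k = (pp F (n - 1 - k))⁻¹ * finRotate n := by
  intro k
  induction k with
  | zero => intro _; rw [Nat.sub_zero, pp_top hF]; simp [pp]
  | succ k ih =>
    intro hk
    have hk' : k < n - 1 := by omega
    set kf : Fin (n - 1) := ⟨k, hk'⟩ with hkf
    have h1 : pp (Bfun F) (k + 1) = Bfun F kf * pp (Bfun F) k := pp_succ (Bfun F) kf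
    have hrev : (kf.rev : ℕ) = n - 1 - 1 - k := by show n - 1 - (k + 1) = n - 1 - 1 - k; omega
    have h2 : n - 1 - k = (kf.rev : ℕ) + 1 := by omega
    have h3 : pp F ((kf.rev : ℕ) + 1) = F kf.rev * pp F kf.rev.val := pp_succ F kf.rev
    rw [h1, ih (by omega), Bfun, h2, h3]
    have h4 : n - 1 - (k + 1) = (kf.rev : ℕ) := by omega
    rw [h4]
    group

lemma isMinFact_Bfun {n : ℕ} {F : Fin (n - 1) → Equiv.Perm (Fin n)} (hF : IsMinFact n F) :
    IsMinFact n (Bfun F) := by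
  constructor
  · intro k
    obtain ⟨a, b, hab, hs⟩ := hF.1 k.rev
    refine ⟨(pp F k.rev.val)⁻¹ a, (pp F k.rev.val)⁻¹ b, by simpa using hab, ?_⟩
    rw [Bfun, hs, Equiv.swap_apply_apply]
    group
  · have h := ppB hF (n - 1) le_rfl
    have heq : (List.ofFn (Bfun F)).take (n - 1) = List.ofFn (Bfun F) := by
      apply List.take_of_length_le; simp
    rw [pp, heq] at h
    rw [h]
    simp [pp]

lemma mcount_eq {n : ℕ} (F : Fin (n - 1) → Equiv.Perm (Fin n)) (x : Fin n) :
    Mcount F x = (Finset.univ.filter fun k : Fin (n - 1) =>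
      F k (pp F k.val x) ≠ pp F k.val x).card := by
  unfold Mcount
  congr 1
  apply Finset.filter_congr
  intro k _
  have h := pp_succ F k
  rw [show ((List.ofFn F).take ((k:ℕ)+1)).reverse.prod = pp F ((k:ℕ)+1) from rfl, h]
  simp only [Equiv.Perm.mul_apply, pp]
  tauto

lemma card_rev {n : ℕ} (p : Fin (n - 1) → Prop) [DecidablePred p] :
    (Finset.univ.filter fun k : Fin (n - 1) => p k.rev).card =
      (Finset.univ.filter p).card := by
  apply Finset.card_bij' (fun k _ => Fin.rev k) (fun k _ => Fin.rev k) <;>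
    simp [Fin.rev_rev]

lemma tcount_Bfun {n : ℕ} (F : Fin (n - 1) → Equiv.Perm (Fin n)) (x : Fin n) :
    Tcount (Bfun F) x = Mcount F x := by
  rw [mcount_eq, Tcount]
  rw [← card_rev (fun k : Fin (n-1) => F k (pp F k.val x) ≠ pp F k.val x)]
  congr 1
  apply Finset.filter_congr
  intro k _
  simp only [Bfun, Equiv.Perm.mul_apply, ne_eq, Equiv.Perm.inv_eq_iff_eq]

lemma mcount_Bfun {n : ℕ} {F : Fin (n - 1) → Equiv.Perm (Fin n)} (hF : IsMinFact n F)
    (x : Fin n) : Mcount (Bfun F) x = Tcount F (finRotate n x) := by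
  rw [Mcount, Tcount,
    ← card_rev (fun k : Fin (n-1) => F k (finRotate n x) ≠ finRotate n x)]
  congr 1
  apply Finset.filter_congr
  intro k _
  have hk := k.isLt
  have e1 : ((List.ofFn (Bfun F)).take (k:ℕ)).reverse.prod = pp (Bfun F) k := rfl
  have e2 : ((List.ofFn (Bfun F)).take ((k:ℕ)+1)).reverse.prod = pp (Bfun F) ((k:ℕ)+1) := rfl
  rw [e1, e2, ppB hF k (by omega), ppB hF ((k:ℕ)+1) (by omega)]
  have hrev : (k.rev : ℕ) = n - 1 - 1 - (k : ℕ) := by simp only [Fin.val_rev]; omega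
  have h2 : n - 1 - (k : ℕ) = (k.rev : ℕ) + 1 := by omega
  have h4 : n - 1 - ((k : ℕ) + 1) = (k.rev : ℕ) := by omega
  rw [h2, h4, pp_succ F k.rev]
  simp only [mul_inv_rev, Equiv.Perm.mul_apply, ne_eq, Equiv.Perm.inv_eq_iff_eq,
    EmbeddingLike.apply_eq_iff_eq]
  exact not_iff_not.mpr eq_comm

lemma Bfun_Bfun {n : ℕ} {F : Fin (n - 1) → Equiv.Perm (Fin n)} (hF : IsMinFact n F) :
    Bfun (Bfun F) = fun k => (finRotate n)⁻¹ * F k * finRotate n := by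
  funext k
  have hk := k.isLt
  have hrev : (k.rev : ℕ) = n - 1 - 1 - (k : ℕ) := by simp only [Fin.val_rev]; omega
  have h4 : n - 1 - (k.rev : ℕ) = (k : ℕ) + 1 := by omega
  have e : Bfun (Bfun F) k =
      (pp (Bfun F) k.rev.val)⁻¹ * (Bfun F) k.rev * pp (Bfun F) k.rev.val := rfl
  rw [e, ppB hF _ (by omega), h4]
  have e2 : Bfun F k.rev = (pp F k.rev.rev.val)⁻¹ * F k.rev.rev * pp F k.rev.rev.val := rfl
  rw [e2, Fin.rev_rev, pp_succ F k]
  group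

/-- there is a bijection `B` of the set of minimal factorizations of
size `n` such that for every `F` and every `1 ≤ i ≤ n`, `M_i(F) = T_i(B F)` and
`T_i(F) = M_{i-1}(B F)`, where the index `i-1` is taken to be `n` when `i = 1`
(element `i` of `{1,…,n}` is the index `i-1 : Fin n`). -/
theorem exists_duality_bijection (n : ℕ) (hn : 2 ≤ n) :
    ∃ B : {F : Fin (n - 1) → Equiv.Perm (Fin n) // IsMinFact n F} ≃
          {F : Fin (n - 1) → Equiv.Perm (Fin n) // IsMinFact n F},
      ∀ F, ∀ i (h1 : 1 ≤ i) (h2 : i ≤ n),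
        Mcount F.val ⟨i - 1, by omega⟩ = Tcount (B F).val ⟨i - 1, by omega⟩ ∧
        Tcount F.val ⟨i - 1, by omega⟩ =
          Mcount (B F).val ⟨if i = 1 then n - 1 else i - 2, by split <;> omega⟩ := by
  classical
  let Bsub : {F : Fin (n - 1) → Equiv.Perm (Fin n) // IsMinFact n F} →
      {F : Fin (n - 1) → Equiv.Perm (Fin n) // IsMinFact n F} :=
    fun F => ⟨Bfun F.val, isMinFact_Bfun F.prop⟩
  have hinj : Function.Injective Bsub := by
    intro F F' h
    have h1 : Bfun F.val = Bfun F'.val := congrArg Subtype.val h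
    have h2 : Bfun (Bfun F.val) = Bfun (Bfun F'.val) := by rw [h1]
    rw [Bfun_Bfun F.prop, Bfun_Bfun F'.prop] at h2
    apply Subtype.ext
    funext k
    have hk := congrFun h2 k
    exact mul_left_cancel (mul_right_cancel hk)
  refine ⟨Equiv.ofBijective Bsub ((Finite.injective_iff_bijective).mp hinj), ?_⟩
  intro F i h1 h2
  have hB : (Equiv.ofBijective Bsub ((Finite.injective_iff_bijective).mp hinj) F).val
      = Bfun F.val := rfl
  constructor
  · rw [hB, tcount_Bfun]
  · rw [hB, mcount_Bfun F.prop]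
    congr 1
    obtain ⟨m, rfl⟩ : ∃ m, n = m + 1 := ⟨n - 1, by omega⟩
    rw [finRotate_succ_apply]
    apply Fin.ext
    have hm : 1 % (m + 1) = 1 := Nat.mod_eq_of_lt (by omega)
    simp only [Fin.add_def, Fin.val_one', hm]
    split
    · rename_i hi
      have e : m + 1 - 1 + 1 = m + 1 := by omega
      rw [e, Nat.mod_self]
      omega
    · rename_i hi
      have e : i - 2 + 1 = i - 1 := by omega
      rw [e]
      exact (Nat.mod_eq_of_lt (by omega)).symm
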